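/- Fix k ≥ 0 and order the type Fin k → Bool pointwise (with false < true). Let C be the smallest collection of subsets of Fin k → Bool such that (i) every upper set belongs to C, and (ii) whenever U is an upper set and S ∈ C, the difference U \ S belongs to C. Then every subset X of Fin k → Bool belongs to C. (Equivalently: every propositional formula is equivalent to an iterated difference of monotone formulas, φ₁ − (φ₂ − (φ₃ − ⋯)).) -/

import Mathlib

inductive DiffChain {k : ℕ} : Set (Fin k → Bool) → Prop
  | upper (U : Set (Fin k → Bool)) : IsUpperSet U → DiffChain U
  | diff (U S : Set (Fin k → Bool)) : IsUpperSet U → DiffChain S → DiffChain (U \ S)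

theorem every_set_is_diff_chain (k : ℕ) (X : Set (Fin k → Bool)) : DiffChain X := by
  suffices h : ∀ n (X : Set (Fin k → Bool)), (↑(upperClosure X) : Set (Fin k → Bool)).ncard ≤ n →
      DiffChain X from h ((↑(upperClosure X) : Set (Fin k → Bool)).ncard) X le_rfl
  intro n
  induction n with
  | zero =>
    intro X hX
    have : (↑(upperClosure X) : Set (Fin k → Bool)) = ∅ := by
      rw [← Set.ncard_eq_zero (Set.toFinite _)]; omega
    have hXe : X = ∅ :=
      Set.subset_eq_empty (this ▸ subset_upperClosure (s := X)) rfl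
    rw [hXe]
    exact DiffChain.upper _ isUpperSet_empty
  | succ n ih =>
    intro X hX
    rcases X.eq_empty_or_nonempty with rfl | hne
    · exact DiffChain.upper _ isUpperSet_empty
    · set U : Set (Fin k → Bool) := ↑(upperClosure X) with hU
      have hXU : X ⊆ U := subset_upperClosure
      have hrw : X = U \ (U \ X) := by
        ext x; simp only [Set.mem_diff]; tauto
      rw [hrw]
      refine DiffChain.diff _ _ (upperClosure X).upper ?_
      apply ih
      -- upperClosure (U \ X) ⊊ U
      classical
      obtain ⟨m, hmX, hmin⟩ := (X.toFinite.toFinset).exists_minimal (by rw [Set.Finite.toFinset_nonempty]; exact hne)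
      simp only [Set.Finite.mem_toFinset] at hmX hmin
      have hsub : (↑(upperClosure (U \ X)) : Set (Fin k → Bool)) ⊆ U := by
        intro y hy
        obtain ⟨s, hs, hsy⟩ := hy
        exact (upperClosure X).upper hsy hs.1
      have hm : m ∉ (↑(upperClosure (U \ X)) : Set (Fin k → Bool)) := by
        rintro ⟨s, ⟨hsU, hsX⟩, hsm⟩
        obtain ⟨x, hx, hxs⟩ := hsU
        rcases eq_or_lt_of_le hsm with rfl | hlt
        · exact hsX hmX
        · rcases eq_or_lt_of_le hxs with rfl | hlt2
          · exact absurd hlt (not_lt_of_ge (hmin hx hlt.le))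
          · exact (not_lt_of_ge (hmin hx (hlt2.trans hlt).le)) (hlt2.trans hlt)
      have hss : (↑(upperClosure (U \ X)) : Set (Fin k → Bool)) ⊂ U :=
        ⟨hsub, fun h => hm (h (hXU hmX))⟩
      have := Set.ncard_lt_ncard hss (Set.toFinite _)
      omega
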